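/- arXiv:2411.09532 — 4 statements merged into one kernel-verified Lean document; each statement's English description precedes it below -/
import Mathlib

section
/- Let Z be a Zinbiel algebra over a field K which is the internal direct sum Z = Z₁ ⊕ Z₂ of two ideals Z₁ and Z₂. Then the quasi-centroid decomposes as a direct sum of subspaces QΓ(Z) = Q₁ ⊕ Q₂ ⊕ C₁ ⊕ C₂, where Qᵢ is the set of φ ∈ QΓ(Z) with φ(Zᵢ) ⊆ Zᵢ and φ vanishing on the complementary ideal, and, for i ≠ j, Cᵢ is the set of linear maps φ : Z → Z vanishing on Z_j with φ(Zᵢ) ⊆ C(Z_j). That is, every element of QΓ(Z) is uniquely a sum φ₁ + φ₂ + ψ₁ + ψ₂ with φᵢ ∈ Qᵢ and ψᵢ ∈ Cᵢ, and each such sum lies in QΓ(Z). -/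
/-- If a Zinbiel algebra `Z` is the internal direct sum of two ideals `Z₁` and `Z₂`,
then its quasi-centroid decomposes as `QΓ(Z) = Q₁ ⊕ Q₂ ⊕ C₁ ⊕ C₂`:
every element of `QΓ(Z)` is uniquely the sum of elements of `Q₁, Q₂, C₁, C₂`,
and every such sum belongs to `QΓ(Z)`. Here `Qᵢ` consists of the elements of the
quasi-centroid preserving `Zᵢ` and vanishing on the complementary ideal, and `Cᵢ`
consists of the linear maps vanishing on `Z_j` and sending `Zᵢ` into the center of
`Z_j` (for `i ≠ j`). -/
theorem quasiCentroid_direct_sum_decomposition {K Z : Type*} [Field K] [AddCommGroup Z]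
    [Module K Z] (mul : Z →ₗ[K] Z →ₗ[K] Z)
    (hZinbiel : ∀ p q r : Z, mul (mul p q) r = mul p (mul q r) + mul p (mul r q))
    (Z₁ Z₂ : Submodule K Z)
    (hI₁ : ∀ p r : Z, r ∈ Z₁ → mul p r ∈ Z₁ ∧ mul r p ∈ Z₁)
    (hI₂ : ∀ p r : Z, r ∈ Z₂ → mul p r ∈ Z₂ ∧ mul r p ∈ Z₂)
    (hmeet : Z₁ ⊓ Z₂ = ⊥) (hjoin : Z₁ ⊔ Z₂ = ⊤) :
    let QC : Set (Module.End K Z) := {φ | ∀ p q : Z, mul (φ p) q = mul p (φ q)}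
    let Q₁ : Set (Module.End K Z) :=
      {φ | φ ∈ QC ∧ (∀ x ∈ Z₁, φ x ∈ Z₁) ∧ (∀ x ∈ Z₂, φ x = 0)}
    let Q₂ : Set (Module.End K Z) :=
      {φ | φ ∈ QC ∧ (∀ x ∈ Z₂, φ x ∈ Z₂) ∧ (∀ x ∈ Z₁, φ x = 0)}
    let C₁ : Set (Module.End K Z) :=
      {φ | (∀ x ∈ Z₂, φ x = 0) ∧
        ∀ x ∈ Z₁, φ x ∈ Z₂ ∧ ∀ q ∈ Z₂, mul (φ x) q = 0 ∧ mul q (φ x) = 0}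
    let C₂ : Set (Module.End K Z) :=
      {φ | (∀ x ∈ Z₁, φ x = 0) ∧
        ∀ x ∈ Z₂, φ x ∈ Z₁ ∧ ∀ q ∈ Z₁, mul (φ x) q = 0 ∧ mul q (φ x) = 0}
    (∀ φ₁ ∈ Q₁, ∀ φ₂ ∈ Q₂, ∀ ψ₁ ∈ C₁, ∀ ψ₂ ∈ C₂, φ₁ + φ₂ + ψ₁ + ψ₂ ∈ QC) ∧
    ∀ φ ∈ QC, ∃! t : Module.End K Z × Module.End K Z × Module.End K Z × Module.End K Z,
      t.1 ∈ Q₁ ∧ t.2.1 ∈ Q₂ ∧ t.2.2.1 ∈ C₁ ∧ t.2.2.2 ∈ C₂ ∧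
      φ = t.1 + t.2.1 + t.2.2.1 + t.2.2.2 := by
  intro QC Q₁ Q₂ C₁ C₂
  have hcompl : IsCompl Z₁ Z₂ := ⟨disjoint_iff.mpr hmeet, codisjoint_iff.mpr hjoin⟩
  -- projections
  set π₁ : Module.End K Z := Z₁.subtype ∘ₗ Z₁.linearProjOfIsCompl Z₂ hcompl with hπ₁def
  set π₂ : Module.End K Z := Z₂.subtype ∘ₗ Z₂.linearProjOfIsCompl Z₁ hcompl.symm with hπ₂def
  have hπ₁mem : ∀ x, π₁ x ∈ Z₁ := fun x => (Z₁.linearProjOfIsCompl Z₂ hcompl x).2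
  have hπ₂mem : ∀ x, π₂ x ∈ Z₂ := fun x => (Z₂.linearProjOfIsCompl Z₁ hcompl.symm x).2
  have hπ₁left : ∀ x ∈ Z₁, π₁ x = x := fun x hx =>
    congrArg Subtype.val (Submodule.linearProjOfIsCompl_apply_left hcompl ⟨x, hx⟩)
  have hπ₂left : ∀ x ∈ Z₂, π₂ x = x := fun x hx =>
    congrArg Subtype.val (Submodule.linearProjOfIsCompl_apply_left hcompl.symm ⟨x, hx⟩)
  have hπ₁right : ∀ x ∈ Z₂, π₁ x = 0 := fun x hx => by
    have := Submodule.projectionOnto_apply_of_mem_right hcompl hx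
    exact congrArg Subtype.val this
  have hπ₂right : ∀ x ∈ Z₁, π₂ x = 0 := fun x hx => by
    have := Submodule.projectionOnto_apply_of_mem_right hcompl.symm hx
    exact congrArg Subtype.val this
  have hsum : ∀ x, π₁ x + π₂ x = x := fun x =>
    Submodule.projection_add_projection_eq_self hcompl x
  -- an element in both ideals is zero
  have hzero : ∀ z : Z, z ∈ Z₁ → z ∈ Z₂ → z = 0 := by
    intro z h1 h2
    have : z ∈ Z₁ ⊓ Z₂ := ⟨h1, h2⟩
    simpa [hmeet] using this
  -- cross products vanish
  have hcr12 : ∀ x ∈ Z₁, ∀ y ∈ Z₂, mul x y = 0 := fun x hx y hy =>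
    hzero _ (hI₁ y x hx).2 (hI₂ x y hy).1
  have hcr21 : ∀ x ∈ Z₂, ∀ y ∈ Z₁, mul x y = 0 := fun x hx y hy =>
    hzero _ (hI₁ x y hy).1 (hI₂ y x hx).2
  -- elements of C₁ and C₂ multiply to zero with everything
  have hC₁zero : ∀ ψ ∈ C₁, ∀ p q : Z, mul (ψ p) q = 0 ∧ mul p (ψ q) = 0 := by
    rintro ψ ⟨hv, hm⟩ p q
    have hp : ψ p = ψ (π₁ p) := by
      conv_lhs => rw [← hsum p]
      rw [map_add, hv _ (hπ₂mem p), add_zero]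
    have hq : ψ q = ψ (π₁ q) := by
      conv_lhs => rw [← hsum q]
      rw [map_add, hv _ (hπ₂mem q), add_zero]
    obtain ⟨hmemp, hcenp⟩ := hm (π₁ p) (hπ₁mem p)
    obtain ⟨hmemq, hcenq⟩ := hm (π₁ q) (hπ₁mem q)
    constructor
    · rw [hp]
      conv_lhs => rw [← hsum q]
      rw [map_add, hcr21 _ hmemp _ (hπ₁mem q), (hcenp _ (hπ₂mem q)).1, add_zero]
    · rw [hq]
      conv_lhs => rw [← hsum p]
      rw [map_add, LinearMap.add_apply, hcr12 _ (hπ₁mem p) _ hmemq,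
        (hcenq _ (hπ₂mem p)).2, add_zero]
  have hC₂zero : ∀ ψ ∈ C₂, ∀ p q : Z, mul (ψ p) q = 0 ∧ mul p (ψ q) = 0 := by
    rintro ψ ⟨hv, hm⟩ p q
    have hp : ψ p = ψ (π₂ p) := by
      conv_lhs => rw [← hsum p]
      rw [map_add, hv _ (hπ₁mem p), zero_add]
    have hq : ψ q = ψ (π₂ q) := by
      conv_lhs => rw [← hsum q]
      rw [map_add, hv _ (hπ₁mem q), zero_add]
    obtain ⟨hmemp, hcenp⟩ := hm (π₂ p) (hπ₂mem p)
    obtain ⟨hmemq, hcenq⟩ := hm (π₂ q) (hπ₂mem q)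
    constructor
    · rw [hp]
      conv_lhs => rw [← hsum q]
      rw [map_add, (hcenp _ (hπ₁mem q)).1, hcr12 _ hmemp _ (hπ₂mem q), add_zero]
    · rw [hq]
      conv_lhs => rw [← hsum p]
      rw [map_add, LinearMap.add_apply, (hcenq _ (hπ₁mem p)).2,
        hcr21 _ (hπ₂mem p) _ hmemq, add_zero]
  constructor
  · -- sums belong to QC
    intro φ₁ hφ₁ φ₂ hφ₂ ψ₁ hψ₁ ψ₂ hψ₂ p q
    have e1 := hφ₁.1 p q
    have e2 := hφ₂.1 p q
    have e3 := hC₁zero ψ₁ hψ₁ p q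
    have e4 := hC₂zero ψ₂ hψ₂ p q
    simp only [LinearMap.add_apply, map_add, e1, e2, e3.1, e3.2, e4.1, e4.2]
  · -- unique decomposition
    intro φ hφ
    -- key fact: for x ∈ Z₁, π₂ (φ x) is central in Z₂
    have hB₁ : ∀ x ∈ Z₁, ∀ q ∈ Z₂, mul (π₂ (φ x)) q = 0 ∧ mul q (π₂ (φ x)) = 0 := by
      intro x hx q hq
      constructor
      · refine hzero _ ?_ ((hI₂ q (π₂ (φ x)) (hπ₂mem _)).2)
        have h1 : mul (π₂ (φ x)) q = mul x (π₁ (φ q)) := by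
          have e : mul (φ x) q = mul x (φ q) := hφ x q
          conv_lhs at e => rw [← hsum (φ x)]
          conv_rhs at e => rw [← hsum (φ q)]
          rw [map_add, LinearMap.add_apply, hcr12 _ (hπ₁mem _) _ hq, zero_add,
            map_add, hcr12 _ hx _ (hπ₂mem _), add_zero] at e
          exact e
        rw [h1]
        exact (hI₁ x _ (hπ₁mem _)).1
      · refine hzero _ ?_ ((hI₂ q (π₂ (φ x)) (hπ₂mem _)).1)
        have h1 : mul q (π₂ (φ x)) = mul (π₁ (φ q)) x := by
          have e : mul (φ q) x = mul q (φ x) := hφ q x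
          conv_lhs at e => rw [← hsum (φ q)]
          conv_rhs at e => rw [← hsum (φ x)]
          rw [map_add, LinearMap.add_apply, hcr21 _ (hπ₂mem _) _ hx, add_zero,
            map_add, hcr21 _ hq _ (hπ₁mem _), zero_add] at e
          exact e.symm
        rw [h1]
        exact (hI₁ _ x hx).1
    have hB₂ : ∀ x ∈ Z₂, ∀ q ∈ Z₁, mul (π₁ (φ x)) q = 0 ∧ mul q (π₁ (φ x)) = 0 := by
      intro x hx q hq
      constructor
      · refine hzero _ ((hI₁ q (π₁ (φ x)) (hπ₁mem _)).2) ?_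
        have h1 : mul (π₁ (φ x)) q = mul x (π₂ (φ q)) := by
          have e : mul (φ x) q = mul x (φ q) := hφ x q
          conv_lhs at e => rw [← hsum (φ x)]
          conv_rhs at e => rw [← hsum (φ q)]
          rw [map_add, LinearMap.add_apply, hcr21 _ (hπ₂mem _) _ hq, add_zero,
            map_add, hcr21 _ hx _ (hπ₁mem _), zero_add] at e
          exact e
        rw [h1]
        exact (hI₂ x _ (hπ₂mem _)).1
      · refine hzero _ ((hI₁ q (π₁ (φ x)) (hπ₁mem _)).1) ?_
        have h1 : mul q (π₁ (φ x)) = mul (π₂ (φ q)) x := by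
          have e : mul (φ q) x = mul q (φ x) := hφ q x
          conv_lhs at e => rw [← hsum (φ q)]
          conv_rhs at e => rw [← hsum (φ x)]
          rw [map_add, LinearMap.add_apply, hcr12 _ (hπ₁mem _) _ hx, zero_add,
            map_add, hcr12 _ hq _ (hπ₂mem _), add_zero] at e
          exact e.symm
        rw [h1]
        exact (hI₂ _ x hx).1
    -- the four components
    set Φ₁ : Module.End K Z := π₁ ∘ₗ φ ∘ₗ π₁ with hΦ₁def
    set Φ₂ : Module.End K Z := π₂ ∘ₗ φ ∘ₗ π₂ with hΦ₂def
    set Ψ₁ : Module.End K Z := π₂ ∘ₗ φ ∘ₗ π₁ with hΨ₁def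
    set Ψ₂ : Module.End K Z := π₁ ∘ₗ φ ∘ₗ π₂ with hΨ₂def
    have hΨ₁C₁ : Ψ₁ ∈ C₁ := by
      constructor
      · intro x hx
        simp [hΨ₁def, hπ₁right x hx]
      · intro x hx
        have hx1 : Ψ₁ x = π₂ (φ x) := by simp [hΨ₁def, hπ₁left x hx]
        rw [hx1]
        exact ⟨hπ₂mem _, fun q hq => hB₁ x hx q hq⟩
    have hΨ₂C₂ : Ψ₂ ∈ C₂ := by
      constructor
      · intro x hx
        simp [hΨ₂def, hπ₂right x hx]
      · intro x hx
        have hx1 : Ψ₂ x = π₁ (φ x) := by simp [hΨ₂def, hπ₂left x hx]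
        rw [hx1]
        exact ⟨hπ₁mem _, fun q hq => hB₂ x hx q hq⟩
    have hΦ₁mem : ∀ y, Φ₁ y ∈ Z₁ := fun y => hπ₁mem (φ (π₁ y))
    have hΦ₂mem : ∀ y, Φ₂ y ∈ Z₂ := fun y => hπ₂mem (φ (π₂ y))
    have hΦ₁Q₁ : Φ₁ ∈ Q₁ := by
      refine ⟨?_, ?_, ?_⟩
      · -- Φ₁ ∈ QC
        intro p q
        have lhs1 : mul (Φ₁ p) q = mul (π₁ p) (Φ₁ q) := by
          have h1 : Φ₁ p = φ (π₁ p) - Ψ₁ p := by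
            simp only [hΦ₁def, hΨ₁def, LinearMap.comp_apply]
            exact eq_sub_of_add_eq (hsum (φ (π₁ p)))
          rw [h1, map_sub, LinearMap.sub_apply, (hC₁zero Ψ₁ hΨ₁C₁ p q).1, sub_zero,
            hφ (π₁ p) q]
          have h2 : φ q = π₁ (φ q) + π₂ (φ q) := (hsum _).symm
          rw [h2, map_add, hcr12 _ (hπ₁mem p) _ (hπ₂mem _), add_zero]
          have h3 : π₁ (φ q) = Φ₁ q + Ψ₂ q := by
            have h4 : φ q = φ (π₁ q) + φ (π₂ q) := by rw [← map_add, hsum]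
            simp only [hΦ₁def, hΨ₂def, LinearMap.comp_apply]
            rw [h4, map_add]
          rw [h3, map_add, (hC₂zero Ψ₂ hΨ₂C₂ (π₁ p) q).2, add_zero]
        rw [lhs1]
        have : mul p (Φ₁ q) = mul (π₁ p) (Φ₁ q) + mul (π₂ p) (Φ₁ q) := by
          conv_lhs => rw [← hsum p]
          rw [map_add, LinearMap.add_apply]
        rw [this, hcr21 _ (hπ₂mem p) _ (hΦ₁mem q), add_zero]
      · intro x hx
        exact hπ₁mem _
      · intro x hx
        simp [hΦ₁def, hπ₁right x hx]
    have hΦ₂Q₂ : Φ₂ ∈ Q₂ := by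
      refine ⟨?_, ?_, ?_⟩
      · intro p q
        have lhs1 : mul (Φ₂ p) q = mul (π₂ p) (Φ₂ q) := by
          have h1 : Φ₂ p = φ (π₂ p) - Ψ₂ p := by
            simp only [hΦ₂def, hΨ₂def, LinearMap.comp_apply]
            exact eq_sub_of_add_eq' (hsum (φ (π₂ p)))
          rw [h1, map_sub, LinearMap.sub_apply, (hC₂zero Ψ₂ hΨ₂C₂ p q).1, sub_zero,
            hφ (π₂ p) q]
          have h2 : φ q = π₁ (φ q) + π₂ (φ q) := (hsum _).symm
          rw [h2, map_add, hcr21 _ (hπ₂mem p) _ (hπ₁mem _), zero_add]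
          have h3 : π₂ (φ q) = Φ₂ q + Ψ₁ q := by
            have h4 : φ q = φ (π₁ q) + φ (π₂ q) := by rw [← map_add, hsum]
            simp only [hΦ₂def, hΨ₁def, LinearMap.comp_apply]
            rw [h4, map_add, add_comm]
          rw [h3, map_add, (hC₁zero Ψ₁ hΨ₁C₁ (π₂ p) q).2, add_zero]
        rw [lhs1]
        have : mul p (Φ₂ q) = mul (π₁ p) (Φ₂ q) + mul (π₂ p) (Φ₂ q) := by
          conv_lhs => rw [← hsum p]
          rw [map_add, LinearMap.add_apply]
        rw [this, hcr12 _ (hπ₁mem p) _ (hΦ₂mem q), zero_add]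
      · intro x hx
        exact hπ₂mem _
      · intro x hx
        simp [hΦ₂def, hπ₂right x hx]
    have hdecomp : φ = Φ₁ + Φ₂ + Ψ₁ + Ψ₂ := by
      ext x
      simp only [LinearMap.add_apply, hΦ₁def, hΦ₂def, hΨ₁def, hΨ₂def, LinearMap.comp_apply]
      have h1 : φ x = φ (π₁ x) + φ (π₂ x) := by rw [← map_add, hsum]
      symm
      calc π₁ (φ (π₁ x)) + π₂ (φ (π₂ x)) + π₂ (φ (π₁ x)) + π₁ (φ (π₂ x))
          = (π₁ (φ (π₁ x)) + π₂ (φ (π₁ x))) + (π₁ (φ (π₂ x)) + π₂ (φ (π₂ x))) := by abel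
        _ = φ (π₁ x) + φ (π₂ x) := by rw [hsum, hsum]
        _ = φ x := h1.symm
    refine ⟨⟨Φ₁, Φ₂, Ψ₁, Ψ₂⟩, ⟨hΦ₁Q₁, hΦ₂Q₂, hΨ₁C₁, hΨ₂C₂, hdecomp⟩, ?_⟩
    rintro ⟨a, b, c, d⟩ ⟨ha, hb, hc, hd, he⟩
    -- determine each component on Z₁ and Z₂
    have hext : ∀ f g : Module.End K Z,
        (∀ x ∈ Z₁, f x = g x) → (∀ x ∈ Z₂, f x = g x) → f = g := by
      intro f g h1 h2
      ext x
      rw [← hsum x, map_add, map_add, h1 _ (hπ₁mem x), h2 _ (hπ₂mem x)]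
    have key1 : ∀ x ∈ Z₁, φ x = a x + c x := by
      intro x hx
      have : φ x = a x + b x + c x + d x := by rw [he]; simp [LinearMap.add_apply]
      rw [this, hb.2.2 x hx, hd.1 x hx, add_zero, add_zero]
    have key2 : ∀ x ∈ Z₂, φ x = b x + d x := by
      intro x hx
      have : φ x = a x + b x + c x + d x := by rw [he]; simp [LinearMap.add_apply]
      rw [this, ha.2.2 x hx, hc.1 x hx, zero_add, add_zero]
    have ea : a = Φ₁ := by
      refine hext a Φ₁ ?_ ?_
      · intro x hx
        have h1 : Φ₁ x = π₁ (φ x) := by simp [hΦ₁def, hπ₁left x hx]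
        rw [h1, key1 x hx, map_add, hπ₁left _ (ha.2.1 x hx),
          hπ₁right _ ((hc.2 x hx).1), add_zero]
      · intro x hx
        rw [ha.2.2 x hx, (hΦ₁Q₁.2.2 x hx)]
    have ec : c = Ψ₁ := by
      refine hext c Ψ₁ ?_ ?_
      · intro x hx
        have h1 : Ψ₁ x = π₂ (φ x) := by simp [hΨ₁def, hπ₁left x hx]
        rw [h1, key1 x hx, map_add, hπ₂right _ (ha.2.1 x hx),
          hπ₂left _ ((hc.2 x hx).1), zero_add]
      · intro x hx
        rw [hc.1 x hx, (hΨ₁C₁.1 x hx)]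
    have eb : b = Φ₂ := by
      refine hext b Φ₂ ?_ ?_
      · intro x hx
        rw [hb.2.2 x hx, (hΦ₂Q₂.2.2 x hx)]
      · intro x hx
        have h1 : Φ₂ x = π₂ (φ x) := by simp [hΦ₂def, hπ₂left x hx]
        rw [h1, key2 x hx, map_add, hπ₂left _ (hb.2.1 x hx),
          hπ₂right _ ((hd.2 x hx).1), add_zero]
    have ed : d = Ψ₂ := by
      refine hext d Ψ₂ ?_ ?_
      · intro x hx
        rw [hd.1 x hx, (hΨ₂C₂.1 x hx)]
      · intro x hx
        have h1 : Ψ₂ x = π₁ (φ x) := by simp [hΨ₂def, hπ₂left x hx]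
        rw [h1, key2 x hx, map_add, hπ₁right _ (hb.2.1 x hx),
          hπ₁left _ ((hd.2 x hx).1), zero_add]
    simp only [Prod.mk.injEq]
    exact ⟨ea, eb, ec, ed⟩
end

section
/- Every 2-dimensional Zinbiel algebra Z over the complex numbers whose multiplication is not identically zero admits a basis (e₁, e₂) in which the multiplication is given by e₁·e₁ = e₂ and all other products of basis elements are zero; equivalently, Z is isomorphic to the algebra Z₂¹. -/
/-- The multiplication of the 2-dimensional complex Zinbiel algebra `Z₂¹`:
`e₁·e₁ = e₂`, all other products of basis elements zero. -/
def mulZ21 (p q : Fin 2 → ℂ) : Fin 2 → ℂ := ![0, p 0 * q 0]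

/-- Every 2-dimensional complex Zinbiel algebra whose multiplication is not
identically zero is isomorphic to `Z₂¹`. -/
theorem two_dim_zinbiel_classification {Z : Type*} [AddCommGroup Z] [Module ℂ Z]
    [FiniteDimensional ℂ Z] (hdim : Module.finrank ℂ Z = 2)
    (mul : Z →ₗ[ℂ] Z →ₗ[ℂ] Z)
    (hZinbiel : ∀ p q r : Z, mul (mul p q) r = mul p (mul q r) + mul p (mul r q))
    (hne : mul ≠ 0) :
    ∃ ψ : Z ≃ₗ[ℂ] (Fin 2 → ℂ), ∀ p q : Z, ψ (mul p q) = mulZ21 (ψ p) (ψ q) := by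
  classical
  have hcard : Fintype.card (Fin 2) = Module.finrank ℂ Z := by simp [hdim]
  -- Step 1: some square is nonzero
  have hsq : ∃ a : Z, mul a a ≠ 0 := by
    by_contra hc
    push_neg at hc
    have hanti : ∀ p q : Z, mul q p = - mul p q := by
      intro p q
      have h0 : mul (p + q) (p + q) = 0 := hc _
      simp only [map_add, LinearMap.add_apply, hc p, hc q, zero_add, add_zero] at h0
      exact eq_neg_of_add_eq_zero_left h0
    obtain ⟨p, q, hpq⟩ : ∃ p q : Z, mul p q ≠ 0 := by
      by_contra h
      push_neg at h
      exact hne (by ext p q; simp [h p q])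
    have hvr : ∀ r : Z, mul (mul p q) r = 0 := by
      intro r
      rw [hZinbiel p q r, hanti q r, map_neg]
      abel
    have hind : LinearIndependent ℂ ![p, q] := by
      rw [LinearIndependent.pair_iff]
      intro s t hst
      by_cases hs : s = 0
      · subst hs
        refine ⟨rfl, ?_⟩
        rw [zero_smul, zero_add] at hst
        rcases smul_eq_zero.mp hst with ht | hq0
        · exact ht
        · exact absurd (by rw [hq0]; simp) hpq
      · exfalso
        have h2 : p + (s⁻¹ * t) • q = 0 := by
          have := congrArg (fun z => s⁻¹ • z) hst
          simpa [smul_add, smul_smul, inv_mul_cancel₀ hs] using this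
        have hp : p = (-(s⁻¹ * t)) • q := by
          rw [neg_smul]; exact eq_neg_of_add_eq_zero_left h2
        apply hpq
        rw [hp, map_smul, LinearMap.smul_apply, hc q, smul_zero]
    set B := basisOfLinearIndependentOfCardEqFinrank hind hcard with hB
    have hB0 : B 0 = p := by
      rw [hB, coe_basisOfLinearIndependentOfCardEqFinrank]; rfl
    have hB1 : B 1 = q := by
      rw [hB, coe_basisOfLinearIndependentOfCardEqFinrank]; rfl
    have hdec : mul p q = (B.repr (mul p q) 0) • p + (B.repr (mul p q) 1) • q := by
      conv_lhs => rw [← B.sum_repr (mul p q)]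
      rw [Fin.sum_univ_two, hB0, hB1]
    set s := B.repr (mul p q) 0
    set t := B.repr (mul p q) 1
    have hs0 : s = 0 := by
      have h3 : mul (mul p q) q = 0 := hvr q
      rw [hdec] at h3
      rw [map_add, LinearMap.add_apply, map_smul, map_smul, LinearMap.smul_apply,
        LinearMap.smul_apply, hc q, smul_zero, add_zero] at h3
      rcases smul_eq_zero.mp h3 with h | h
      · exact h
      · exact absurd h hpq
    have ht0 : t = 0 := by
      have h3 : mul (mul p q) p = 0 := hvr p
      rw [hdec] at h3
      rw [map_add, LinearMap.add_apply, map_smul, map_smul, LinearMap.smul_apply,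
        LinearMap.smul_apply, hc p, smul_zero, zero_add, hanti p q] at h3
      rcases smul_eq_zero.mp h3 with h | h
      · exact h
      · exact absurd (neg_eq_zero.mp h) hpq
    apply hpq
    rw [hdec, hs0, ht0, zero_smul, zero_smul, add_zero]
  obtain ⟨a, ha⟩ := hsq
  set b := mul a a with hb
  have ha0 : a ≠ 0 := by
    intro h; apply ha; rw [hb, h]; simp
  -- independence of a and b
  have hindab : LinearIndependent ℂ ![a, b] := by
    rw [LinearIndependent.pair_iff]
    intro s t hst
    by_cases ht : t = 0
    · subst ht
      refine ⟨?_, rfl⟩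
      rw [zero_smul, add_zero] at hst
      rcases smul_eq_zero.mp hst with h | h
      · exact h
      · exact absurd h ha0
    · exfalso
      have h2 : (t⁻¹ * s) • a + b = 0 := by
        have := congrArg (fun z => t⁻¹ • z) hst
        simpa [smul_add, smul_smul, inv_mul_cancel₀ ht] using this
      set l : ℂ := -(t⁻¹ * s) with hl
      have hbl : b = l • a := by
        rw [hl, neg_smul]
        exact eq_neg_of_add_eq_zero_right h2
      have hl0 : l ≠ 0 := by
        intro h; apply ha; rw [hbl, h, zero_smul]
      have hZ := hZinbiel a a a
      rw [← hb, hbl] at hZ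
      simp only [map_smul, LinearMap.smul_apply] at hZ
      rw [← hb, hbl, smul_smul] at hZ
      -- hZ : (l * l) • a = (l*l) • a + (l*l) • a
      have h4 : (l * l) • a = 0 := by
        have := hZ
        nth_rewrite 1 [← add_zero ((l*l) • a)] at this
        exact (add_left_cancel this).symm
      rcases smul_eq_zero.mp h4 with h | h
      · exact hl0 (by
          rcases mul_eq_zero.mp h with h' | h' <;> exact h')
      · exact ha0 h
  set B := basisOfLinearIndependentOfCardEqFinrank hindab hcard with hB
  have hB0 : B 0 = a := by
    rw [hB, coe_basisOfLinearIndependentOfCardEqFinrank]; rfl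
  have hB1 : B 1 = b := by
    rw [hB, coe_basisOfLinearIndependentOfCardEqFinrank]; rfl
  have hdec : ∀ z : Z, z = (B.repr z 0) • a + (B.repr z 1) • b := by
    intro z
    conv_lhs => rw [← B.sum_repr z]
    rw [Fin.sum_univ_two, hB0, hB1]
  have hpair : ∀ s t : ℂ, s • a + t • b = 0 → s = 0 ∧ t = 0 :=
    LinearIndependent.pair_iff.mp hindab
  -- products
  have hba : mul b a = mul a b + mul a b := by
    have := hZinbiel a a a; rw [← hb] at this; exact this
  set x := mul a b with hx
  set al := B.repr x 0 with hal
  set be := B.repr x 1 with hbe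
  have hxdec : x = al • a + be • b := hdec x
  -- key identity: mul x a = 3 • mul a x
  have hkey : mul x a = mul a x + mul a x + mul a x := by
    have h5 := hZinbiel a b a
    rw [← hx, hba, map_add] at h5
    exact h5
  -- expand both sides in the basis
  have hxa : mul x a = al • b + be • (x + x) := by
    conv_lhs => rw [hxdec]
    rw [map_add, LinearMap.add_apply, map_smul, map_smul, LinearMap.smul_apply,
      LinearMap.smul_apply, ← hb, hba]
  have hax : mul a x = al • b + be • x := by
    conv_lhs => rw [hxdec]
    simp only [map_add, map_smul]
    rfl
  have hzero : (be * al) • a + (al + al + be * be) • b = 0 := by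
    have h6 : al • b + be • (x + x) = (al • b + be • x) + (al • b + be • x) + (al • b + be • x) := by
      rw [← hxa, ← hax, hkey]
    have h7 : al • b + al • b + be • x = 0 := by
      have := h6
      rw [smul_add] at this
      -- this : al•b + (be•x + be•x) = (al•b + be•x) + (al•b + be•x) + (al•b + be•x)
      linear_combination (norm := abel) - this
    rw [hxdec, smul_add, smul_smul, smul_smul] at h7
    linear_combination (norm := module) h7
  obtain ⟨h8, h9⟩ := hpair _ _ hzero
  have hbe0 : be = 0 := by
    by_cases h : be = 0
    · exact h
    · have : al = 0 := by
        rcases mul_eq_zero.mp h8 with h' | h'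
        · exact absurd h' h
        · exact h'
      rw [this] at h9
      simp at h9
      exact absurd h9 h
  have hal0 : al = 0 := by
    rw [hbe0] at h9
    have : al + al = 0 := by linear_combination h9
    linear_combination this / 2
  have hx0 : x = 0 := by rw [hxdec, hal0, hbe0, zero_smul, zero_smul, add_zero]
  have hba0 : mul b a = 0 := by rw [hba, hx0, add_zero]
  have hbb0 : mul b b = 0 := by
    have := hZinbiel a a b
    rw [← hb, ← hx, hx0, hba0] at this
    simpa using this
  -- build the isomorphism
  refine ⟨B.equivFun, fun p q => ?_⟩
  have hp := hdec p
  have hq := hdec q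
  set p0 := B.repr p 0
  set p1 := B.repr p 1
  set q0 := B.repr q 0
  set q1 := B.repr q 1
  have hmul : mul p q = (p0 * q0) • b := by
    conv_lhs => rw [hp, hq]
    simp only [map_add, map_smul, LinearMap.add_apply, LinearMap.smul_apply]
    rw [← hb, ← hx, hx0, hba0, hbb0]
    simp [smul_smul, mul_comm]
  have hpsip : B.equivFun p 0 = p0 := by rw [Module.Basis.equivFun_apply]
  have hpsiq : B.equivFun q 0 = q0 := by rw [Module.Basis.equivFun_apply]
  rw [hmul, map_smul]
  funext i
  fin_cases i
  · simp only [Pi.smul_apply, mulZ21, Matrix.cons_val_zero]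
    rw [← hB1, Module.Basis.equivFun_self]
    simp
  · simp only [Pi.smul_apply, mulZ21, hpsip, hpsiq]
    rw [← hB1, Module.Basis.equivFun_self]
    simp [Matrix.cons_val_one]
end

section
/- Let Z₂¹ be the 2-dimensional complex Zinbiel algebra with basis (e₁, e₂) and e₁·e₁ = e₂ (all other products of basis elements zero). A linear map φ : Z₂¹ → Z₂¹ belongs to the centroid Γ(Z₂¹) if and only if there exist a, b ∈ ℂ with φ(e₁) = a e₁ + b e₂ and φ(e₂) = a e₂. In particular, Γ(Z₂¹) is a 2-dimensional subspace of End(Z₂¹). -/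
/-- The endomorphism `e₁ ↦ e₂`, `e₂ ↦ 0`. -/
def Emap : Module.End ℂ (Fin 2 → ℂ) where
  toFun v := ![0, v 0]
  map_add' := by intro u v; funext i; fin_cases i <;> simp
  map_smul' := by intro c v; funext i; fin_cases i <;> simp

lemma Emap_apply (v : Fin 2 → ℂ) : Emap v = ![0, v 0] := rfl

lemma decomp (v : Fin 2 → ℂ) : v = v 0 • ![1, 0] + v 1 • ![0, 1] := by
  funext i; fin_cases i <;> simp

lemma phi_apply (φ : Module.End ℂ (Fin 2 → ℂ)) (a b : ℂ)
    (h1 : φ ![1, 0] = a • ![1, 0] + b • ![0, 1]) (h2 : φ ![0, 1] = a • ![0, 1])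
    (v : Fin 2 → ℂ) : φ v = ![a * v 0, b * v 0 + a * v 1] := by
  conv_lhs => rw [decomp v]
  rw [map_add, map_smul, map_smul, h1, h2]
  funext i; fin_cases i <;> simp <;> ring

lemma cent_iff (φ : Module.End ℂ (Fin 2 → ℂ)) :
    (∀ p q : Fin 2 → ℂ,
        φ (mulZ21 p q) = mulZ21 (φ p) q ∧ φ (mulZ21 p q) = mulZ21 p (φ q)) ↔
      ∃ a b : ℂ, φ ![1, 0] = a • ![1, 0] + b • ![0, 1] ∧ φ ![0, 1] = a • ![0, 1] := by
  constructor
  · intro h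
    refine ⟨φ ![1, 0] 0, φ ![1, 0] 1, ?_, ?_⟩
    · funext i; fin_cases i <;> simp
    · have h1 := (h ![1, 0] ![1, 0]).1
      have e : mulZ21 ![1, 0] ![1, 0] = ![0, 1] := by
        funext i; fin_cases i <;> simp [mulZ21]
      rw [e] at h1
      rw [h1]
      funext i; fin_cases i <;> simp [mulZ21]
  · rintro ⟨a, b, h1, h2⟩ p q
    have hp := phi_apply φ a b h1 h2
    constructor <;>
    · rw [hp, hp]
      funext i; fin_cases i <;> simp [mulZ21] <;> ring

/-- A linear map `φ` on `Z₂¹` belongs to the centroid `Γ(Z₂¹)` iff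
`φ(e₁) = a e₁ + b e₂` and `φ(e₂) = a e₂` for some `a, b ∈ ℂ`; in particular
`Γ(Z₂¹)` is a 2-dimensional subspace of `End(Z₂¹)`. -/
theorem centroid_Z21 :
    (∀ φ : Module.End ℂ (Fin 2 → ℂ),
      (∀ p q : Fin 2 → ℂ,
        φ (mulZ21 p q) = mulZ21 (φ p) q ∧ φ (mulZ21 p q) = mulZ21 p (φ q)) ↔
      ∃ a b : ℂ, φ ![1, 0] = a • ![1, 0] + b • ![0, 1] ∧ φ ![0, 1] = a • ![0, 1]) ∧
    ∃ S : Submodule ℂ (Module.End ℂ (Fin 2 → ℂ)),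
      (∀ φ, φ ∈ S ↔ ∀ p q : Fin 2 → ℂ,
        φ (mulZ21 p q) = mulZ21 (φ p) q ∧ φ (mulZ21 p q) = mulZ21 p (φ q)) ∧
      Module.finrank ℂ S = 2 := by
  refine ⟨cent_iff, Submodule.span ℂ (Set.range ![LinearMap.id, Emap]), ?_, ?_⟩
  · intro φ
    have hrange : Set.range ![(LinearMap.id : Module.End ℂ (Fin 2 → ℂ)), Emap]
        = {LinearMap.id, Emap} := by
      simp [Set.range_subset_iff]
      ext x; simp [Fin.exists_fin_two, Set.mem_insert_iff]; tauto
    rw [hrange, cent_iff, Submodule.mem_span_pair]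
    constructor
    · rintro ⟨c, d, rfl⟩
      refine ⟨c, d, ?_, ?_⟩ <;>
      · funext i; fin_cases i <;> simp [Emap_apply]
    · rintro ⟨a, b, h1, h2⟩
      refine ⟨a, b, ?_⟩
      refine LinearMap.ext fun v => ?_
      rw [LinearMap.add_apply, LinearMap.smul_apply, LinearMap.smul_apply,
        LinearMap.id_apply, Emap_apply, phi_apply φ a b h1 h2]
      funext i; fin_cases i <;> simp <;> ring
  · have hli : LinearIndependent ℂ ![(LinearMap.id : Module.End ℂ (Fin 2 → ℂ)), Emap] := by
      rw [LinearIndependent.pair_iff]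
      intro s t h
      have h1 : (s • (LinearMap.id : Module.End ℂ (Fin 2 → ℂ)) + t • Emap) ![1, 0] = 0 :=
        by rw [h]; rfl
      rw [LinearMap.add_apply, LinearMap.smul_apply, LinearMap.smul_apply,
        LinearMap.id_apply, Emap_apply] at h1
      constructor
      · have := congrFun h1 0; simpa using this
      · have := congrFun h1 1; simpa using this
    have := finrank_span_eq_card hli
    simpa using this
end

section
/- Let Z₃³ be the 3-dimensional complex Zinbiel algebra with basis (e₁, e₂, e₃) and nonzero products e₁·e₁ = e₃ and e₂·e₂ = e₃ (all other products of basis elements zero). A linear map d : Z₃³ → Z₃³ is a derivation if and only if there exist a, b, c, f ∈ ℂ with d(e₁) = a e₁ + b e₂ + c e₃, d(e₂) = −b e₁ + a e₂ + f e₃, and d(e₃) = 2a e₃. In particular, Der(Z₃³) is 4-dimensional. -/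
/-- The multiplication of the 3-dimensional complex Zinbiel algebra `Z₃³`:
`e₁·e₁ = e₃`, `e₂·e₂ = e₃`, all other products of basis elements zero. -/
def mulZ33 (p q : Fin 3 → ℂ) : Fin 3 → ℂ := ![0, 0, p 0 * q 0 + p 1 * q 1]

lemma zero3 : (![0,0,0] : Fin 3 → ℂ) = 0 := by
  funext i; fin_cases i <;> simp

lemma decomp3 (p : Fin 3 → ℂ) :
    p = p 0 • ![(1:ℂ),0,0] + p 1 • ![0,1,0] + p 2 • ![0,0,1] := by
  funext i
  fin_cases i <;> simp

lemma end_apply (d : Module.End ℂ (Fin 3 → ℂ)) (p : Fin 3 → ℂ) :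
    d p = p 0 • d ![1,0,0] + p 1 • d ![0,1,0] + p 2 • d ![0,0,1] := by
  conv_lhs => rw [decomp3 p]
  simp only [map_add, map_smul]

lemma end_ext3 (d₁ d₂ : Module.End ℂ (Fin 3 → ℂ))
    (h1 : d₁ ![1,0,0] = d₂ ![1,0,0]) (h2 : d₁ ![0,1,0] = d₂ ![0,1,0])
    (h3 : d₁ ![0,0,1] = d₂ ![0,0,1]) : d₁ = d₂ := by
  apply LinearMap.ext
  intro p
  rw [end_apply d₁ p, end_apply d₂ p, h1, h2, h3]

lemma deriv_iff (d : Module.End ℂ (Fin 3 → ℂ)) :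
    (∀ p q : Fin 3 → ℂ, d (mulZ33 p q) = mulZ33 (d p) q + mulZ33 p (d q)) ↔
      ∃ a b c f : ℂ,
        d ![1, 0, 0] = a • ![1, 0, 0] + b • ![0, 1, 0] + c • ![0, 0, 1] ∧
        d ![0, 1, 0] = (-b) • ![1, 0, 0] + a • ![0, 1, 0] + f • ![0, 0, 1] ∧
        d ![0, 0, 1] = (2 * a) • ![0, 0, 1] := by
  constructor
  · intro h
    refine ⟨d ![1,0,0] 0, d ![1,0,0] 1, d ![1,0,0] 2, d ![0,1,0] 2, ?_, ?_, ?_⟩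
    · funext i; fin_cases i <;> simp
    · -- need (d e₂) 0 = -(d e₁ 1), (d e₂) 1 = d e₁ 0
      have h12 := congrFun (h ![1,0,0] ![0,1,0]) 2
      have h11 := congrFun (h ![1,0,0] ![1,0,0]) 2
      have h22 := congrFun (h ![0,1,0] ![0,1,0]) 2
      simp [mulZ33, zero3] at h12 h11 h22
      funext i
      fin_cases i <;> simp
      · linear_combination -h12
      · linear_combination (h11 - h22) / 2
    · have h11 := congrFun (h ![1,0,0] ![1,0,0]) 2
      have h13a := congrFun (h ![1,0,0] ![0,0,1]) 2
      have h23a := congrFun (h ![0,1,0] ![0,0,1]) 2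
      simp [mulZ33, zero3] at h11 h13a h23a
      funext i
      fin_cases i <;> simp
      · rw [← h13a]
      · rw [← h23a]
      · linear_combination h11
  · rintro ⟨a, b, c, f, h1, h2, h3⟩
    intro p q
    have hm : d (mulZ33 p q) = (p 0 * q 0 + p 1 * q 1) • d ![0,0,1] := by
      rw [end_apply d (mulZ33 p q)]
      simp [mulZ33]
    rw [hm, h3, end_apply d p, end_apply d q, h1, h2, h3]
    funext i
    fin_cases i <;> simp [mulZ33] <;> ring

noncomputable def D1 : Module.End ℂ (Fin 3 → ℂ) := Matrix.toLin' !![1,0,0;0,1,0;0,0,2]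
noncomputable def D2 : Module.End ℂ (Fin 3 → ℂ) := Matrix.toLin' !![0,-1,0;1,0,0;0,0,0]
noncomputable def D3 : Module.End ℂ (Fin 3 → ℂ) := Matrix.toLin' !![0,0,0;0,0,0;1,0,0]
noncomputable def D4 : Module.End ℂ (Fin 3 → ℂ) := Matrix.toLin' !![0,0,0;0,0,0;0,1,0]

noncomputable def Phi : (Fin 4 → ℂ) →ₗ[ℂ] Module.End ℂ (Fin 3 → ℂ) :=
  (LinearMap.proj 0).smulRight D1 + (LinearMap.proj 1).smulRight D2 +
  (LinearMap.proj 2).smulRight D3 + (LinearMap.proj 3).smulRight D4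

lemma Phi_apply (v : Fin 4 → ℂ) (p : Fin 3 → ℂ) :
    Phi v p = v 0 • D1 p + v 1 • D2 p + v 2 • D3 p + v 3 • D4 p := by
  simp [Phi]

lemma Phi_e1 (v : Fin 4 → ℂ) : Phi v ![1,0,0] = ![v 0, v 1, v 2] := by
  rw [Phi_apply]
  funext i
  fin_cases i <;>
    simp [D1, D2, D3, D4, Matrix.toLin'_apply, Matrix.mulVec, dotProduct,
      Fin.sum_univ_three]

lemma Phi_e2 (v : Fin 4 → ℂ) : Phi v ![0,1,0] = ![-(v 1), v 0, v 3] := by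
  rw [Phi_apply]
  funext i
  fin_cases i <;>
    simp [D1, D2, D3, D4, Matrix.toLin'_apply, Matrix.mulVec, dotProduct,
      Fin.sum_univ_three]

lemma Phi_e3 (v : Fin 4 → ℂ) : Phi v ![0,0,1] = ![0, 0, 2 * v 0] := by
  rw [Phi_apply]
  funext i
  fin_cases i <;>
    simp [D1, D2, D3, D4, Matrix.toLin'_apply, Matrix.mulVec, dotProduct,
      Fin.sum_univ_three, mul_comm]

lemma Phi_inj : Function.Injective Phi := by
  rw [← LinearMap.ker_eq_bot, LinearMap.ker_eq_bot']
  intro v hv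
  have h1 : Phi v ![1,0,0] = 0 := by rw [hv]; rfl
  have h2 : Phi v ![0,1,0] = 0 := by rw [hv]; rfl
  rw [Phi_e1] at h1
  rw [Phi_e2] at h2
  funext i
  fin_cases i
  · simpa using congrFun h1 0
  · simpa using congrFun h1 1
  · simpa using congrFun h1 2
  · simpa using congrFun h2 2

lemma range_eq (d : Module.End ℂ (Fin 3 → ℂ)) :
    d ∈ LinearMap.range Phi ↔
    ∀ p q : Fin 3 → ℂ, d (mulZ33 p q) = mulZ33 (d p) q + mulZ33 p (d q) := by
  rw [deriv_iff]
  constructor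
  · rintro ⟨v, rfl⟩
    refine ⟨v 0, v 1, v 2, v 3, ?_, ?_, ?_⟩ <;>
      [rw [Phi_e1]; rw [Phi_e2]; rw [Phi_e3]] <;>
      (funext i; fin_cases i <;> simp)
  · rintro ⟨a, b, c, f, h1, h2, h3⟩
    refine ⟨![a, b, c, f], ?_⟩
    apply end_ext3
    · rw [Phi_e1, h1]; funext i; fin_cases i <;> simp
    · rw [Phi_e2, h2]; funext i; fin_cases i <;> simp
    · rw [Phi_e3, h3]; funext i; fin_cases i <;> simp [mul_comm]

/-- A linear map `d` on `Z₃³` is a derivation iff `d(e₁) = a e₁ + b e₂ + c e₃`,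
`d(e₂) = -b e₁ + a e₂ + f e₃` and `d(e₃) = 2a e₃` for some `a, b, c, f ∈ ℂ`;
in particular `Der(Z₃³)` is 4-dimensional. -/
theorem derivations_Z33 :
    (∀ d : Module.End ℂ (Fin 3 → ℂ),
      (∀ p q : Fin 3 → ℂ, d (mulZ33 p q) = mulZ33 (d p) q + mulZ33 p (d q)) ↔
      ∃ a b c f : ℂ,
        d ![1, 0, 0] = a • ![1, 0, 0] + b • ![0, 1, 0] + c • ![0, 0, 1] ∧
        d ![0, 1, 0] = (-b) • ![1, 0, 0] + a • ![0, 1, 0] + f • ![0, 0, 1] ∧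
        d ![0, 0, 1] = (2 * a) • ![0, 0, 1]) ∧
    ∃ S : Submodule ℂ (Module.End ℂ (Fin 3 → ℂ)),
      (∀ d, d ∈ S ↔ ∀ p q : Fin 3 → ℂ, d (mulZ33 p q) = mulZ33 (d p) q + mulZ33 p (d q)) ∧
      Module.finrank ℂ S = 4 := by
  refine ⟨deriv_iff, LinearMap.range Phi, range_eq, ?_⟩
  rw [LinearMap.finrank_range_of_inj Phi_inj]
  simp
end
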